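/- Let f: ℝⁿ → ℝ be twice continuously differentiable with M-Lipschitz Hessian, and suppose (∇²f(x)+μI)d = -∇f(x) with μ ≥ M‖d‖. Then ⟨∇f(x+d), −d⟩ ≥ ‖∇f(x+d)‖²/(2μ) + (3/8)μ‖d‖². -/

import Mathlib

open Real InnerProductSpace Set
open scoped RealInnerProductSpace

theorem taylor_aux {E : Type*} [NormedAddCommGroup E] [NormedSpace ℝ E]
    (G : E → E) (M : ℝ) (x d : E) (hG : Differentiable ℝ G)
    (hLip : ∀ u v : E, ‖fderiv ℝ G u - fderiv ℝ G v‖ ≤ M * ‖u - v‖) :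
    ‖G (x + d) - G x - fderiv ℝ G x d‖ ≤ M / 2 * ‖d‖ ^ 2 := by
  set φ : ℝ → E := fun t => G (x + t • d) - G x - t • (fderiv ℝ G x) d with hφdef
  set φ' : ℝ → E := fun t => (fderiv ℝ G (x + t • d)) d - (fderiv ℝ G x) d with hφ'def
  have hc : ∀ t : ℝ, HasDerivAt (fun t : ℝ => x + t • d) d t := by
    intro t
    simpa using ((hasDerivAt_id t).smul_const d).const_add x
  have hφ' : ∀ t : ℝ, HasDerivAt φ (φ' t) t := by
    intro t
    have h1 : HasDerivAt (fun t : ℝ => G (x + t • d)) ((fderiv ℝ G (x + t • d)) d) t :=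
      (hG _).hasFDerivAt.comp_hasDerivAt t (hc t)
    simpa [hφdef, hφ'def, Pi.sub_def] using
      (h1.sub_const (G x)).sub ((hasDerivAt_id t).smul_const ((fderiv ℝ G x) d))
  have hB : ∀ t : ℝ, HasDerivAt (fun t : ℝ => M * ‖d‖ ^ 2 * t ^ 2 / 2) (M * ‖d‖ ^ 2 * t) t := by
    intro t
    have h2 : M * ‖d‖ ^ 2 * (↑2 * t ^ 1) / 2 = M * ‖d‖ ^ 2 * t := by ring
    exact h2 ▸ (((hasDerivAt_pow 2 t).const_mul (M * ‖d‖ ^ 2)).div_const 2)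
  have key : ∀ t ∈ Icc (0:ℝ) 1, ‖φ t‖ ≤ M * ‖d‖ ^ 2 * t ^ 2 / 2 := by
    refine image_norm_le_of_norm_deriv_right_le_deriv_boundary
      (fun t _ => (hφ' t).continuousAt.continuousWithinAt)
      (fun t _ => (hφ' t).hasDerivWithinAt) (by simp [hφdef]) hB ?_
    intro t ht
    have h1 : φ' t = (fderiv ℝ G (x + t • d) - fderiv ℝ G x) d := by
      simp [hφ'def, ContinuousLinearMap.sub_apply]
    rw [h1]
    calc ‖(fderiv ℝ G (x + t • d) - fderiv ℝ G x) d‖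
        ≤ ‖fderiv ℝ G (x + t • d) - fderiv ℝ G x‖ * ‖d‖ :=
          ContinuousLinearMap.le_opNorm _ _
      _ ≤ (M * ‖x + t • d - x‖) * ‖d‖ :=
          mul_le_mul_of_nonneg_right (hLip _ _) (norm_nonneg d)
      _ = M * ‖d‖ ^ 2 * t := by
          have : ‖x + t • d - x‖ = t * ‖d‖ := by
            rw [add_sub_cancel_left, norm_smul, Real.norm_eq_abs, abs_of_nonneg ht.1]
          rw [this]; ring
  calc ‖G (x + d) - G x - (fderiv ℝ G x) d‖ = ‖φ 1‖ := by simp [hφdef]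
    _ ≤ M * ‖d‖ ^ 2 * 1 ^ 2 / 2 := key 1 ⟨zero_le_one, le_refl 1⟩
    _ = M / 2 * ‖d‖ ^ 2 := by ring

/-- If `f` is twice continuously differentiable with `M`-Lipschitz Hessian and
`(∇²f(x) + μI) d = -∇f(x)` with `μ ≥ M‖d‖`, then
`⟨∇f(x+d), -d⟩ ≥ ‖∇f(x+d)‖²/(2μ) + (3/8)μ‖d‖²`. -/
theorem stmt1 {n : ℕ} (f : EuclideanSpace ℝ (Fin n) → ℝ) (M μ : ℝ)
    (x d : EuclideanSpace ℝ (Fin n))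
    (hf : ContDiff ℝ 2 f) (hM : 0 < M)
    (hLip : ∀ u v : EuclideanSpace ℝ (Fin n),
      ‖fderiv ℝ (gradient f) u - fderiv ℝ (gradient f) v‖ ≤ M * ‖u - v‖)
    (hμ : M * ‖d‖ ≤ μ)
    (heq : (fderiv ℝ (gradient f) x) d + μ • d = - gradient f x) :
    ⟪gradient f (x + d), -d⟫ ≥ ‖gradient f (x + d)‖ ^ 2 / (2 * μ) + 3 / 8 * μ * ‖d‖ ^ 2 := by
  have hG1 : ContDiff ℝ 1 (gradient f) := by
    have h1 : ContDiff ℝ 1 (fderiv ℝ f) := hf.fderiv_right (by norm_num)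
    exact (toDual ℝ (EuclideanSpace ℝ (Fin n))).symm.contDiff.comp h1
  have hG : Differentiable ℝ (gradient f) := hG1.differentiable one_ne_zero
  have hbound := taylor_aux (gradient f) M x d hG hLip
  have hHd : (fderiv ℝ (gradient f) x) d = -gradient f x - μ • d := eq_sub_of_add_eq heq
  have hr : gradient f (x + d) - gradient f x - (fderiv ℝ (gradient f) x) d
      = gradient f (x + d) + μ • d := by rw [hHd]; abel
  rw [hr] at hbound
  have hμ0 : 0 ≤ μ := le_trans (mul_nonneg hM.le (norm_nonneg d)) hμ
  rcases hμ0.eq_or_lt with hμz | hμpos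
  · have hd0 : d = 0 := by
      have : ‖d‖ ≤ 0 := by nlinarith [norm_nonneg d]
      simpa using le_antisymm this (norm_nonneg d)
    simp [hd0, ← hμz]
  set g := gradient f (x + d) with hg
  set r := g + μ • d with hrdef
  have hrn : ‖r‖ ≤ μ / 2 * ‖d‖ := by nlinarith [norm_nonneg d, norm_nonneg r]
  have hrsq : ‖r‖ ^ 2 ≤ (μ / 2 * ‖d‖) ^ 2 := by
    have := mul_self_le_mul_self (norm_nonneg r) hrn
    nlinarith
  have hgd : ⟪r, d⟫ = ⟪g, d⟫ + μ * ‖d‖ ^ 2 := by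
    rw [hrdef, inner_add_left, real_inner_smul_left, real_inner_self_eq_norm_sq]
  have hg2 : ‖g‖ ^ 2 = ‖r‖ ^ 2 - 2 * (μ * ⟪r, d⟫) + μ ^ 2 * ‖d‖ ^ 2 := by
    have h1 : g = r - μ • d := by rw [hrdef]; abel
    rw [h1, norm_sub_sq_real, real_inner_smul_right, norm_smul, Real.norm_eq_abs]
    rw [mul_pow, sq_abs]
  rw [ge_iff_le, ← sub_nonneg]
  have h2μ : (0:ℝ) < 2 * μ := by linarith
  have hinner : ⟪g, -d⟫ = -⟪g, d⟫ := by rw [inner_neg_right]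
  rw [hinner]
  have hdiv : ‖g‖ ^ 2 / (2 * μ) = (‖r‖ ^ 2 - 2 * (μ * ⟪r, d⟫) + μ ^ 2 * ‖d‖ ^ 2) / (2 * μ) := by
    rw [hg2]
  rw [hdiv, div_add' _ _ _ h2μ.ne', sub_nonneg, div_le_iff₀ h2μ]
  nlinarith [norm_nonneg d, norm_nonneg r]
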